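/- Let P_n be the path graph on n vertices with n ≥ 2 and let c be any proper coloring of P_n. Then every up-color dominating c-set of P_n has at least ⌈n/3⌉ elements, and there exists an up-color dominating c-set of P_n with at most ⌈n/2⌉ elements. -/
import Mathlib


/-- `D` is an up-color dominating `c`-set of `G`. -/
def IsUCDomSet {V : Type*} (G : SimpleGraph V) (c : V → ℕ) (D : Finset V) : Prop :=
  (∀ v ∉ D, ∃ d ∈ D, G.Adj v d ∧ c v < c d) ∧ ∀ d ∈ D, 1 ≤ c d

/-- The path graph on `n` vertices: `vᵢ` is adjacent to `vᵢ₊₁`. -/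
def pathGr (n : ℕ) : SimpleGraph (Fin n) :=
  SimpleGraph.fromRel (fun i j => (j : ℕ) = (i : ℕ) + 1)

lemma pathGr_adj {n : ℕ} {u v : Fin n} :
    (pathGr n).Adj u v ↔ u ≠ v ∧ ((v : ℕ) = u + 1 ∨ (u : ℕ) = v + 1) := by
  simp [pathGr, SimpleGraph.fromRel_adj]

lemma pathGr_adj_mk {n a b : ℕ} (ha : a < n) (hb : b < n) (h : b = a + 1 ∨ a = b + 1) :
    (pathGr n).Adj ⟨a, ha⟩ ⟨b, hb⟩ := by
  rw [pathGr_adj]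
  refine ⟨?_, h⟩
  intro heq
  rw [Fin.mk.injEq] at heq
  omega

theorem stmt_6 (n : ℕ) (hn : 2 ≤ n)
    (c : Fin n → ℕ) (hc : ∀ ⦃u v⦄, (pathGr n).Adj u v → c u ≠ c v) :
    (∀ D : Finset (Fin n), IsUCDomSet (pathGr n) c D → (n + 2) / 3 ≤ D.card) ∧
      (∃ D : Finset (Fin n), IsUCDomSet (pathGr n) c D ∧ D.card ≤ (n + 1) / 2) := by
  constructor
  · -- lower bound
    intro D hD
    obtain ⟨hdom, _⟩ := hD
    have hg : ∀ v : Fin n, ∃ d, d ∈ D ∧ (v = d ∨ (pathGr n).Adj v d) := by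
      intro v
      by_cases hv : v ∈ D
      · exact ⟨v, hv, Or.inl rfl⟩
      · obtain ⟨d, hd, hadj, _⟩ := hdom v hv
        exact ⟨d, hd, Or.inr hadj⟩
    choose g hgD hgadj using hg
    have key : ∀ d ∈ D, (Finset.univ.filter (fun v => g v = d)).card ≤ 3 := by
      intro d _
      have hmap : ∀ v ∈ Finset.univ.filter (fun v => g v = d),
          (v : ℕ) ∈ ({(d : ℕ) - 1, (d : ℕ), (d : ℕ) + 1} : Finset ℕ) := by
        intro v hv
        simp only [Finset.mem_filter, Finset.mem_univ, true_and] at hv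
        have := hgadj v
        rw [hv] at this
        rcases this with h | h
        · simp [h]
        · rw [pathGr_adj] at h
          simp only [Finset.mem_insert, Finset.mem_singleton]
          omega
      have hinj : Set.InjOn (fun v : Fin n => (v : ℕ))
          (Finset.univ.filter (fun v => g v = d)) := by
        intro a _ b _ hab
        exact Fin.ext hab
      calc (Finset.univ.filter (fun v => g v = d)).card
          ≤ ({(d : ℕ) - 1, (d : ℕ), (d : ℕ) + 1} : Finset ℕ).card :=
            Finset.card_le_card_of_injOn _ hmap hinj
        _ ≤ 3 := by
            apply le_trans (Finset.card_insert_le _ _)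
            apply Nat.succ_le_succ
            apply le_trans (Finset.card_insert_le _ _)
            simp
    have hcover : (Finset.univ : Finset (Fin n)) ⊆
        D.biUnion (fun d => Finset.univ.filter (fun v => g v = d)) := by
      intro v _
      simp only [Finset.mem_biUnion, Finset.mem_filter, Finset.mem_univ, true_and]
      exact ⟨g v, hgD v, rfl⟩
    have h1 : n ≤ 3 * D.card := by
      have := Finset.card_le_card hcover
      have h2 := Finset.card_biUnion_le (s := D)
        (t := fun d => Finset.univ.filter (fun v => g v = d))
      have h3 : ∑ d ∈ D, (Finset.univ.filter (fun v => g v = d)).card ≤ ∑ d ∈ D, 3 :=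
        Finset.sum_le_sum key
      simp only [Finset.sum_const, smul_eq_mul, Finset.card_univ, Fintype.card_fin] at *
      omega
    omega
  · -- upper bound construction
    have h1n : 1 ≤ n := by omega
    set f : ℕ → Fin n := fun k =>
      if h : 2 * k + 1 < n then
        (if c ⟨2 * k, by omega⟩ < c ⟨2 * k + 1, h⟩ then ⟨2 * k + 1, h⟩ else ⟨2 * k, by omega⟩)
      else
        (if 1 ≤ c ⟨n - 1, by omega⟩ then ⟨n - 1, by omega⟩ else ⟨n - 2, by omega⟩) with hf
    have hfpos : ∀ (k : ℕ) (h : 2 * k + 1 < n), f k =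
        if c ⟨2 * k, by omega⟩ < c ⟨2 * k + 1, h⟩ then ⟨2 * k + 1, h⟩
        else ⟨2 * k, by omega⟩ := fun k h => dif_pos h
    have hfneg : ∀ (k : ℕ), ¬ (2 * k + 1 < n) → f k =
        if 1 ≤ c ⟨n - 1, by omega⟩ then ⟨n - 1, by omega⟩
        else ⟨n - 2, by omega⟩ := fun k h => dif_neg h
    refine ⟨(Finset.range ((n + 1) / 2)).image f, ⟨?_, ?_⟩, ?_⟩
    · -- domination
      intro v hv
      simp only [Finset.mem_image, Finset.mem_range, not_exists, not_and] at hv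
      obtain ⟨i, hi⟩ := v
      have hk : i / 2 < (n + 1) / 2 := by omega
      have hne := hv (i / 2) hk
      rcases Nat.even_or_odd i with ⟨m, hm⟩ | ⟨m, hm⟩
      · -- i = 2m even
        have hmk : i / 2 = m := by omega
        rw [hmk] at hne
        by_cases h2 : 2 * m + 1 < n
        · have hlt : c ⟨2 * m, by omega⟩ < c ⟨2 * m + 1, h2⟩ := by
            by_contra hge
            apply hne
            rw [hfpos m h2, if_neg hge, Fin.mk.injEq]
            omega
          refine ⟨⟨2 * m + 1, h2⟩, ?_, ?_, ?_⟩
          · simp only [Finset.mem_image, Finset.mem_range]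
            exact ⟨m, by omega, by rw [hfpos m h2, if_pos hlt]⟩
          · exact pathGr_adj_mk _ _ (by omega)
          · have hee : (⟨i, hi⟩ : Fin n) = ⟨2 * m, by omega⟩ := by
              rw [Fin.mk.injEq]; omega
            rw [hee]; exact hlt
        · -- i = n - 1, last vertex
          have hi' : i = n - 1 := by omega
          have hc0 : c ⟨i, hi⟩ = 0 := by
            by_contra h0
            apply hne
            rw [hfneg m h2, if_pos (by
              have hee : (⟨n - 1, by omega⟩ : Fin n) = ⟨i, hi⟩ := by
                rw [Fin.mk.injEq]; omega
              rw [hee]; omega), Fin.mk.injEq]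
            omega
          have hadj : (pathGr n).Adj ⟨i, hi⟩ ⟨n - 2, by omega⟩ :=
            pathGr_adj_mk _ _ (by omega)
          have hcne := hc hadj
          refine ⟨⟨n - 2, by omega⟩, ?_, hadj, by omega⟩
          simp only [Finset.mem_image, Finset.mem_range]
          refine ⟨m, by omega, ?_⟩
          rw [hfneg m h2, if_neg (by
            have hee : (⟨n - 1, by omega⟩ : Fin n) = ⟨i, hi⟩ := by
              rw [Fin.mk.injEq]; omega
            rw [hee]; omega)]
      · -- i = 2m + 1 odd
        have hmk : i / 2 = m := by omega
        rw [hmk] at hne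
        have h2 : 2 * m + 1 < n := by omega
        have hadj0 : (pathGr n).Adj (⟨2 * m, by omega⟩ : Fin n) ⟨2 * m + 1, h2⟩ :=
          pathGr_adj_mk _ _ (by omega)
        have hcne := hc hadj0
        have hlt : c ⟨2 * m + 1, h2⟩ < c ⟨2 * m, by omega⟩ := by
          rcases Nat.lt_or_ge (c ⟨2 * m + 1, h2⟩) (c ⟨2 * m, by omega⟩) with h | h
          · exact h
          · exfalso
            apply hne
            rw [hfpos m h2, if_pos (by omega), Fin.mk.injEq]
            omega
        refine ⟨⟨2 * m, by omega⟩, ?_, ?_, ?_⟩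
        · simp only [Finset.mem_image, Finset.mem_range]
          exact ⟨m, by omega, by rw [hfpos m h2, if_neg (by omega)]⟩
        · exact pathGr_adj_mk _ _ (by omega)
        · have hee : (⟨i, hi⟩ : Fin n) = ⟨2 * m + 1, h2⟩ := by
            rw [Fin.mk.injEq]; omega
          rw [hee]; exact hlt
    · -- colors of members ≥ 1
      intro d hd
      simp only [Finset.mem_image, Finset.mem_range] at hd
      obtain ⟨k, hk, hfk⟩ := hd
      by_cases h2 : 2 * k + 1 < n
      · rw [hfpos k h2] at hfk
        have hcne := hc (pathGr_adj_mk (show 2 * k < n by omega) h2 (by omega))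
        split_ifs at hfk with h3
        · rw [← hfk]; omega
        · rw [← hfk]; omega
      · rw [hfneg k h2] at hfk
        split_ifs at hfk with h3
        · rw [← hfk]; exact h3
        · have hcne := hc (pathGr_adj_mk (show n - 1 < n by omega)
            (show n - 2 < n by omega) (by omega))
          rw [← hfk]; omega
    · calc ((Finset.range ((n + 1) / 2)).image f).card
          ≤ (Finset.range ((n + 1) / 2)).card := Finset.card_image_le
        _ = (n + 1) / 2 := Finset.card_range _
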